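/- Let $d\ge 2$ and $\nu=(d-2)/2>0$. For $0<\lambda\le 1$ and $r>1$, define $u(r;\lambda) = -r^{-\nu}\big[J_\nu(\lambda r)Y_\nu(\lambda) - J_\nu(\lambda)Y_\nu(\lambda r)\big]$, where $J_\nu, Y_\nu$ are the Bessel functions of the first and second kind. Then $|u(r;\lambda)|\lesssim 1\wedge (\lambda r)^{-(d-1)/2}$ uniformly for $r>1$ and $0<\lambda\le 1$. -/

import Mathlib

open Real

/-- Crude bound on the exterior eigenfunctions built from Bessel functions:
assuming the standard bounds `|J_ν(x)| ≲ x^ν ∧ x^{-1/2}` and `|Y_ν(x)| ≲ x^{-ν} ∨ x^{-1/2}`,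
the function `u(r;λ) = -r^{-ν}[J_ν(λr)Y_ν(λ) - J_ν(λ)Y_ν(λr)]` (with `ν = (d-2)/2 > 0`)
satisfies `|u(r;λ)| ≲ 1 ∧ (λr)^{-(d-1)/2}` uniformly for `r > 1`, `0 < λ ≤ 1`. -/
theorem exterior_eigenfunction_bound (d : ℕ) (hd : 2 ≤ d)
    (ν : ℝ) (hν : ν = ((d : ℝ) - 2) / 2) (hν0 : 0 < ν)
    (J Y : ℝ → ℝ)
    (hJ : ∃ CJ > 0, ∀ x : ℝ, 0 < x → |J x| ≤ CJ * min (x ^ ν) (x ^ (-(1:ℝ)/2)))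
    (hY : ∃ CY > 0, ∀ x : ℝ, 0 < x → |Y x| ≤ CY * max (x ^ (-ν)) (x ^ (-(1:ℝ)/2))) :
    ∃ C > 0, ∀ r lam : ℝ, 1 < r → 0 < lam → lam ≤ 1 →
      |(-(r ^ (-ν)) * (J (lam * r) * Y lam - J lam * Y (lam * r)))| ≤
        C * min 1 ((lam * r) ^ (-((d : ℝ) - 1) / 2)) := by
  obtain ⟨CJ, hCJ, hJ⟩ := hJ
  obtain ⟨CY, hCY, hY⟩ := hY
  have hd3 : (3:ℝ) ≤ (d:ℝ) := by
    have h2 : 2 < (d:ℝ) := by nlinarith [hν0, hν ▸ hν0]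
    have : 2 < d := by exact_mod_cast h2
    have : 3 ≤ d := this
    exact_mod_cast this
  have hνhalf : (1:ℝ)/2 ≤ ν := by rw [hν]; linarith
  have hexp : -((d : ℝ) - 1) / 2 = -(ν + 1/2) := by rw [hν]; ring
  refine ⟨2 * CJ * CY, by positivity, ?_⟩
  intro r lam hr hlam hlam1
  have hr0 : (0:ℝ) < r := lt_trans one_pos hr
  have hy : 0 < lam * r := mul_pos hlam hr0
  rw [hexp]
  have habs : |(-(r ^ (-ν)) * (J (lam*r) * Y lam - J lam * Y (lam*r)))|
      ≤ r ^ (-ν) * (|J (lam*r)| * |Y lam| + |J lam| * |Y (lam*r)|) := by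
    rw [abs_mul, abs_neg, abs_of_nonneg (Real.rpow_nonneg hr0.le _)]
    gcongr
    calc |J (lam*r) * Y lam - J lam * Y (lam*r)|
        ≤ |J (lam*r) * Y lam| + |J lam * Y (lam*r)| := abs_sub _ _
      _ = |J (lam*r)| * |Y lam| + |J lam| * |Y (lam*r)| := by rw [abs_mul, abs_mul]
  have hJlam : |J lam| ≤ CJ * lam ^ ν := by
    have := hJ lam hlam
    rwa [min_eq_left (Real.rpow_le_rpow_of_exponent_ge hlam hlam1 (by linarith))] at this
  have hYlam : |Y lam| ≤ CY * lam ^ (-ν) := by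
    have := hY lam hlam
    rwa [max_eq_left (Real.rpow_le_rpow_of_exponent_ge hlam hlam1 (by linarith))] at this
  have hrν : (0:ℝ) < r ^ ν := Real.rpow_pos_of_pos hr0 ν
  have hlν : (0:ℝ) < lam ^ ν := Real.rpow_pos_of_pos hlam ν
  rcases le_or_gt (lam * r) 1 with h1 | h1
  · -- case lam * r ≤ 1
    have hmin : min (1:ℝ) ((lam*r) ^ (-(ν + 1/2))) = 1 :=
      min_eq_left (Real.one_le_rpow_of_pos_of_le_one_of_nonpos hy h1 (by linarith))
    rw [hmin, mul_one]
    have hJy : |J (lam*r)| ≤ CJ * (lam*r) ^ ν := by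
      have := hJ (lam*r) hy
      rwa [min_eq_left (Real.rpow_le_rpow_of_exponent_ge hy h1 (by linarith))] at this
    have hYy : |Y (lam*r)| ≤ CY * (lam*r) ^ (-ν) := by
      have := hY (lam*r) hy
      rwa [max_eq_left (Real.rpow_le_rpow_of_exponent_ge hy h1 (by linarith))] at this
    have e1 : r ^ (-ν) * ((lam*r) ^ ν * lam ^ (-ν)) = 1 := by
      rw [Real.mul_rpow hlam.le hr0.le, Real.rpow_neg hr0.le, Real.rpow_neg hlam.le]
      field_simp
    have e2 : r ^ (-ν) * (lam ^ ν * (lam*r) ^ (-ν)) ≤ 1 := by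
      have h1r : (1:ℝ) ≤ r ^ ν := Real.one_le_rpow hr.le hν0.le
      have hinv : (r ^ ν)⁻¹ ≤ 1 := by
        rw [inv_le_one_iff₀]; right; exact h1r
      have eq : r ^ (-ν) * (lam ^ ν * (lam*r) ^ (-ν)) = (r ^ ν)⁻¹ * (r ^ ν)⁻¹ := by
        rw [Real.mul_rpow hlam.le hr0.le, Real.rpow_neg hr0.le, Real.rpow_neg hlam.le]
        field_simp
      rw [eq]
      calc (r ^ ν)⁻¹ * (r ^ ν)⁻¹ ≤ 1 * 1 := by
            apply mul_le_mul hinv hinv (by positivity) (by norm_num)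
        _ = 1 := by ring
    calc |(-(r ^ (-ν)) * (J (lam*r) * Y lam - J lam * Y (lam*r)))|
        ≤ r ^ (-ν) * (|J (lam*r)| * |Y lam| + |J lam| * |Y (lam*r)|) := habs
      _ ≤ r ^ (-ν) * ((CJ * (lam*r) ^ ν) * (CY * lam ^ (-ν)) +
            (CJ * lam ^ ν) * (CY * (lam*r) ^ (-ν))) := by
          gcongr <;> positivity
      _ = CJ * CY * (r ^ (-ν) * ((lam*r) ^ ν * lam ^ (-ν)))
            + CJ * CY * (r ^ (-ν) * (lam ^ ν * (lam*r) ^ (-ν))) := by ring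
      _ ≤ CJ * CY * 1 + CJ * CY * 1 :=
          add_le_add (le_of_eq (by rw [e1])) (mul_le_mul_of_nonneg_left e2 (by positivity))
      _ = 2 * CJ * CY := by ring
  · -- case 1 < lam * r
    have hmin : min (1:ℝ) ((lam*r) ^ (-(ν + 1/2))) = (lam*r) ^ (-(ν + 1/2)) :=
      min_eq_right (Real.rpow_le_one_of_one_le_of_nonpos h1.le (by linarith))
    rw [hmin]
    have hJy : |J (lam*r)| ≤ CJ * (lam*r) ^ (-(1:ℝ)/2) := by
      have := hJ (lam*r) hy
      rwa [min_eq_right (Real.rpow_le_rpow_of_exponent_le h1.le (by linarith))] at this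
    have hYy : |Y (lam*r)| ≤ CY * (lam*r) ^ (-(1:ℝ)/2) := by
      have := hY (lam*r) hy
      rwa [max_eq_right (Real.rpow_le_rpow_of_exponent_le h1.le (by linarith))] at this
    have e1 : r ^ (-ν) * ((lam*r) ^ (-(1:ℝ)/2) * lam ^ (-ν)) = (lam*r) ^ (-(ν + 1/2)) := by
      rw [show -(ν + 1/2) = -ν + (-(1:ℝ)/2) by ring, Real.rpow_add hy]
      simp only [Real.mul_rpow hlam.le hr0.le]
      ring
    have e2 : r ^ (-ν) * (lam ^ ν * (lam*r) ^ (-(1:ℝ)/2)) ≤ (lam*r) ^ (-(ν + 1/2)) := by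
      rw [show -(ν + 1/2) = -ν + (-(1:ℝ)/2) by ring, Real.rpow_add hy]
      simp only [Real.mul_rpow hlam.le hr0.le]
      have hll : lam ^ ν ≤ lam ^ (-ν) :=
        Real.rpow_le_rpow_of_exponent_ge hlam hlam1 (by linarith)
      calc r ^ (-ν) * (lam ^ ν * (lam ^ (-(1:ℝ)/2) * r ^ (-(1:ℝ)/2)))
          = lam ^ ν * (r ^ (-ν) * (lam ^ (-(1:ℝ)/2) * r ^ (-(1:ℝ)/2))) := by ring
        _ ≤ lam ^ (-ν) * (r ^ (-ν) * (lam ^ (-(1:ℝ)/2) * r ^ (-(1:ℝ)/2))) := by gcongr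
        _ = lam ^ (-ν) * r ^ (-ν) * (lam ^ (-(1:ℝ)/2) * r ^ (-(1:ℝ)/2)) := by ring
    calc |(-(r ^ (-ν)) * (J (lam*r) * Y lam - J lam * Y (lam*r)))|
        ≤ r ^ (-ν) * (|J (lam*r)| * |Y lam| + |J lam| * |Y (lam*r)|) := habs
      _ ≤ r ^ (-ν) * ((CJ * (lam*r) ^ (-(1:ℝ)/2)) * (CY * lam ^ (-ν)) +
            (CJ * lam ^ ν) * (CY * (lam*r) ^ (-(1:ℝ)/2))) := by
          gcongr <;> positivity
      _ = CJ * CY * (r ^ (-ν) * ((lam*r) ^ (-(1:ℝ)/2) * lam ^ (-ν)))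
            + CJ * CY * (r ^ (-ν) * (lam ^ ν * (lam*r) ^ (-(1:ℝ)/2))) := by ring
      _ ≤ CJ * CY * ((lam*r) ^ (-(ν + 1/2))) + CJ * CY * ((lam*r) ^ (-(ν + 1/2))) :=
          add_le_add (mul_le_mul_of_nonneg_left e1.le (by positivity))
            (mul_le_mul_of_nonneg_left e2 (by positivity))
      _ = 2 * CJ * CY * ((lam*r) ^ (-(ν + 1/2))) := by ring
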